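/- Let τ be an involution of Q, V a τ-symmetric representation of dimension α = τ·α, σ a weight with σ = −τ·σ, and W the minimal witness of (V,σ). Then the maximal witness of (V,σ) is W^⊥; in particular W is τ-isotropic (W ⊆ W^⊥), and for every vertex x fixed by τ, dim W(x) = 0. -/

import Mathlib

open Module

/-- A family of subspaces `W x ⊆ ℂ^{α x}` is a subrepresentation of the
representation `M` of the quiver with vertices `Vt`, arrows `At`,
head map `hd`, tail map `tl`, if it is stable under all arrow maps. -/
def IsSubrep {Vt At : Type} (hd tl : At → Vt) (α : Vt → ℕ)
    (M : ∀ a : At, Matrix (Fin (α (hd a))) (Fin (α (tl a))) ℂ)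
    (W : ∀ x : Vt, Submodule ℂ (Fin (α x) → ℂ)) : Prop :=
  ∀ a : At, ∀ v ∈ W (tl a), (M a).mulVec v ∈ W (hd a)

/-- `σ(dim W) = ∑ x σ(x) dim W(x)`. -/
noncomputable def sval {Vt : Type} [Fintype Vt] (α : Vt → ℕ) (σ : Vt → ℤ)
    (W : ∀ x : Vt, Submodule ℂ (Fin (α x) → ℂ)) : ℤ :=
  ∑ x, σ x * (Module.finrank ℂ (W x) : ℤ)

/-- A witness of `(V,σ)` : a subrepresentation maximizing `σ(dim ·)`
(i.e. attaining the discrepancy). -/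
def IsWitness {Vt At : Type} [Fintype Vt] (hd tl : At → Vt) (α : Vt → ℕ)
    (M : ∀ a : At, Matrix (Fin (α (hd a))) (Fin (α (tl a))) ℂ) (σ : Vt → ℤ)
    (W : ∀ x : Vt, Submodule ℂ (Fin (α x) → ℂ)) : Prop :=
  IsSubrep hd tl α M W ∧
    ∀ W', IsSubrep hd tl α M W' → sval α σ W' ≤ sval α σ W

/-- `M` is `τ`-symmetric: `M(a) = M(τa)*` (conjugate transpose), entrywise. -/
def TauSymm {Vt At : Type} (hd tl : At → Vt) (α : Vt → ℕ)
    (τ₀ : Vt → Vt) (τ₁ : At → At)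
    (hh : ∀ a, hd (τ₁ a) = τ₀ (tl a)) (ht : ∀ a, tl (τ₁ a) = τ₀ (hd a))
    (hα : ∀ x, α (τ₀ x) = α x)
    (M : ∀ a : At, Matrix (Fin (α (hd a))) (Fin (α (tl a))) ℂ) : Prop :=
  ∀ a : At, ∀ (i : Fin (α (hd a))) (j : Fin (α (tl a))),
    M a i j =
      star (M (τ₁ a)
        (Fin.cast (((congrArg α (hh a)).trans (hα (tl a))).symm) j)
        (Fin.cast (((congrArg α (ht a)).trans (hα (hd a))).symm) i))

/-- Orthogonal complement of `W ⊆ ℂ^m` for the standard Hermitian product,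
viewed in `ℂ^n` along an equality `m = n`. -/
noncomputable def perp {m n : ℕ} (h : m = n) (W : Submodule ℂ (Fin m → ℂ)) :
    Submodule ℂ (Fin n → ℂ) where
  carrier := {v | ∀ w ∈ W, ∑ i : Fin m, star (w i) * v (Fin.cast h i) = 0}
  zero_mem' := by intro w hw; simp
  add_mem' := by
    intro a b ha hb w hw
    have h1 := ha w hw
    have h2 := hb w hw
    simp only [Pi.add_apply, mul_add, Finset.sum_add_distrib, h1, h2, add_zero]
  smul_mem' := by
    intro c v hv w hw
    have h0 := hv w hw
    calc ∑ i : Fin m, star (w i) * (c • v) (Fin.cast h i)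
        = c * ∑ i : Fin m, star (w i) * v (Fin.cast h i) := by
          rw [Finset.mul_sum]
          exact Finset.sum_congr rfl (fun i _ => by
            simp only [Pi.smul_apply, smul_eq_mul]; ring)
      _ = 0 := by rw [h0, mul_zero]

lemma mem_perp {m n : ℕ} (h : m = n) (W : Submodule ℂ (Fin m → ℂ)) (v : Fin n → ℂ) :
    v ∈ perp h W ↔ ∀ w ∈ W, ∑ i : Fin m, star (w i) * v (Fin.cast h i) = 0 := Iff.rfl

lemma perp_rfl {n : ℕ} (U : Submodule ℂ (Fin n → ℂ)) :
    perp rfl U = (Submodule.orthogonal (𝕜 := ℂ) (E := EuclideanSpace ℂ (Fin n))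
      (U.comap (WithLp.linearEquiv 2 ℂ (Fin n → ℂ)).toLinearMap)).comap
        (WithLp.linearEquiv 2 ℂ (Fin n → ℂ)).symm.toLinearMap := by
  ext v
  rw [mem_perp]
  constructor
  · intro hv
    rw [Submodule.mem_comap, Submodule.mem_orthogonal]
    intro w hw
    simpa [PiLp.inner_apply, RCLike.inner_apply, mul_comm] using hv _ hw
  · intro hv w hw
    have := (Submodule.mem_orthogonal _ _).1 (Submodule.mem_comap.1 hv) (WithLp.toLp 2 w) hw
    simpa [PiLp.inner_apply, RCLike.inner_apply, mul_comm] using this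

lemma perp_finrank {m n : ℕ} (h : m = n) (U : Submodule ℂ (Fin m → ℂ)) :
    finrank ℂ (perp h U) + finrank ℂ U = n := by
  subst h
  rw [perp_rfl]
  have := Submodule.finrank_add_finrank_orthogonal (𝕜 := ℂ)
    (E := EuclideanSpace ℂ (Fin m)) (U.comap (WithLp.linearEquiv 2 ℂ (Fin m → ℂ)).toLinearMap)
  rw [add_comm] at this
  rw [← Submodule.map_equiv_eq_comap_symm, LinearEquiv.finrank_map_eq]
  have hU : finrank ℂ (U.comap (WithLp.linearEquiv 2 ℂ (Fin m → ℂ)).toLinearMap) = finrank ℂ U := by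
    rw [Submodule.comap_equiv_eq_map_symm, LinearEquiv.finrank_map_eq]
  rw [hU] at this
  simpa using this

lemma perp_antitone {m n : ℕ} (h : m = n) {U U' : Submodule ℂ (Fin m → ℂ)}
    (hUU' : U ≤ U') : perp h U' ≤ perp h U := by
  intro v hv w hw
  exact hv w (hUU' hw)

noncomputable def csub {m n : ℕ} (h : m = n) (U : Submodule ℂ (Fin m → ℂ)) :
    Submodule ℂ (Fin n → ℂ) :=
  U.comap
    ({ toFun := fun v => fun i => v (Fin.cast h i)
       map_add' := fun _ _ => rfl
       map_smul' := fun _ _ => rfl } : (Fin n → ℂ) →ₗ[ℂ] (Fin m → ℂ))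

lemma mem_csub {m n : ℕ} (h : m = n) (U : Submodule ℂ (Fin m → ℂ)) (v : Fin n → ℂ) :
    v ∈ csub h U ↔ (fun i => v (Fin.cast h i)) ∈ U := Iff.rfl

lemma csub_rfl {n : ℕ} (U : Submodule ℂ (Fin n → ℂ)) : csub rfl U = U := by
  ext v; exact Iff.rfl

lemma perp_perp {m n k : ℕ} (h : m = n) (h' : n = k) (e : m = k)
    (U : Submodule ℂ (Fin m → ℂ)) : perp h' (perp h U) = csub e U := by
  subst h; subst h'
  show perp rfl (perp rfl U) = csub rfl U
  rw [csub_rfl, perp_rfl U, perp_rfl]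
  rw [← Submodule.comap_comp, LinearEquiv.symm_comp, Submodule.comap_id,
    Submodule.orthogonal_orthogonal, ← Submodule.comap_comp, LinearEquiv.comp_symm,
    Submodule.comap_id]

lemma vcast {Vt : Type} (α : Vt → ℕ) (U : ∀ x : Vt, Submodule ℂ (Fin (α x) → ℂ))
    {x y : Vt} (hxy : x = y) (e : α x = α y) : U y = csub e (U x) := by
  subst hxy
  exact (csub_rfl (U x)).symm

lemma perp_subrep {Vt At : Type} (hd tl : At → Vt) (α : Vt → ℕ)
    (τ₀ : Vt → Vt) (τ₁ : At → At)
    (hh : ∀ a, hd (τ₁ a) = τ₀ (tl a)) (ht : ∀ a, tl (τ₁ a) = τ₀ (hd a))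
    (hα : ∀ x, α (τ₀ x) = α x)
    (M : ∀ a : At, Matrix (Fin (α (hd a))) (Fin (α (tl a))) ℂ)
    (hsym : TauSymm hd tl α τ₀ τ₁ hh ht hα M)
    (U : ∀ x : Vt, Submodule ℂ (Fin (α x) → ℂ))
    (hU : IsSubrep hd tl α M U) :
    IsSubrep hd tl α M (fun x => perp (hα x) (U (τ₀ x))) := by
  intro a v hv
  intro w hw
  -- w ∈ U (τ₀ (hd a))
  have hu : (fun k => w (Fin.cast (congrArg α (ht a)) k)) ∈ U (tl (τ₁ a)) := by
    rw [vcast α U (ht a) (congrArg α (ht a))] at hw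
    exact hw
  set u : Fin (α (tl (τ₁ a))) → ℂ := fun k => w (Fin.cast (congrArg α (ht a)) k) with hu_def
  have hz : (M (τ₁ a)).mulVec u ∈ U (hd (τ₁ a)) := hU (τ₁ a) u hu
  have hz' : (fun k : Fin (α (τ₀ (tl a))) =>
      (M (τ₁ a)).mulVec u (Fin.cast (congrArg α (hh a)).symm k)) ∈ U (τ₀ (tl a)) := by
    rw [vcast α U (hh a) (congrArg α (hh a))]
    exact hz
  have h0 := hv _ hz'
  have key : ∀ j : Fin (α (tl a)),
      ∑ i : Fin (α (τ₀ (hd a))), star (w i) * M a (Fin.cast (hα (hd a)) i) j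
        = star ((M (τ₁ a)).mulVec u
            (Fin.cast (((congrArg α (hh a)).trans (hα (tl a))).symm) j)) := by
    intro j
    rw [show (M (τ₁ a)).mulVec u (Fin.cast (((congrArg α (hh a)).trans (hα (tl a))).symm) j)
        = ∑ k : Fin (α (tl (τ₁ a))),
            M (τ₁ a) (Fin.cast (((congrArg α (hh a)).trans (hα (tl a))).symm) j) k * u k from rfl]
    rw [star_sum]
    refine Fintype.sum_equiv (finCongr (congrArg α (ht a)).symm) _ _ (fun i => ?_)
    rw [hsym a (Fin.cast (hα (hd a)) i) j, ← star_mul']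
    rw [mul_comm]
    rfl
  calc ∑ i : Fin (α (τ₀ (hd a))), star (w i) * (M a).mulVec v (Fin.cast (hα (hd a)) i)
      = ∑ i : Fin (α (τ₀ (hd a))), ∑ j : Fin (α (tl a)),
          star (w i) * (M a (Fin.cast (hα (hd a)) i) j * v j) := by
        refine Finset.sum_congr rfl fun i _ => ?_
        rw [show (M a).mulVec v (Fin.cast (hα (hd a)) i)
            = ∑ j, M a (Fin.cast (hα (hd a)) i) j * v j from rfl, Finset.mul_sum]
    _ = ∑ j : Fin (α (tl a)), ∑ i : Fin (α (τ₀ (hd a))),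
          star (w i) * (M a (Fin.cast (hα (hd a)) i) j * v j) := Finset.sum_comm
    _ = ∑ j : Fin (α (tl a)),
          (∑ i : Fin (α (τ₀ (hd a))), star (w i) * M a (Fin.cast (hα (hd a)) i) j) * v j := by
        refine Finset.sum_congr rfl fun j _ => ?_
        rw [Finset.sum_mul]
        exact Finset.sum_congr rfl fun i _ => (mul_assoc _ _ _).symm
    _ = ∑ j : Fin (α (tl a)),
          star ((M (τ₁ a)).mulVec u
            (Fin.cast (((congrArg α (hh a)).trans (hα (tl a))).symm) j)) * v j := by
        exact Finset.sum_congr rfl fun j _ => by rw [key j]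
    _ = ∑ k : Fin (α (τ₀ (tl a))),
          star ((fun k => (M (τ₁ a)).mulVec u (Fin.cast (congrArg α (hh a)).symm k)) k)
            * v (Fin.cast (hα (tl a)) k) :=
        (Fintype.sum_equiv (finCongr (hα (tl a))) _ _ fun k => rfl).symm
    _ = 0 := h0

lemma sval_perp {Vt : Type} [Fintype Vt] (α : Vt → ℕ) (σ : Vt → ℤ) (τ₀ : Vt → Vt)
    (hτ₀ : ∀ x, τ₀ (τ₀ x) = x) (hα : ∀ x, α (τ₀ x) = α x) (hσ : ∀ x, σ (τ₀ x) = -σ x)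
    (U : ∀ x : Vt, Submodule ℂ (Fin (α x) → ℂ)) :
    sval α σ (fun x => perp (hα x) (U (τ₀ x))) = sval α σ U := by
  have hrk : ∀ x, (finrank ℂ (perp (hα x) (U (τ₀ x))) : ℤ)
      = (α x : ℤ) - finrank ℂ (U (τ₀ x)) := by
    intro x
    have := perp_finrank (hα x) (U (τ₀ x))
    omega
  have eτ : Equiv.Perm Vt := Function.Involutive.toPerm τ₀ hτ₀
  have hστ : (∑ x, σ x * (α x : ℤ)) = 0 := by
    have h1 : (∑ x, σ (τ₀ x) * ((α (τ₀ x) : ℤ))) = ∑ x, σ x * (α x : ℤ) :=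
      Fintype.sum_equiv (Function.Involutive.toPerm τ₀ hτ₀) _ _ (fun x => rfl)
    have h2 : (∑ x, σ (τ₀ x) * ((α (τ₀ x) : ℤ))) = -∑ x, σ x * (α x : ℤ) := by
      rw [← Finset.sum_neg_distrib]
      refine Finset.sum_congr rfl fun x _ => ?_
      rw [hσ x, hα x]; ring
    omega
  unfold sval
  have step1 : ∑ x, σ x * (finrank ℂ (perp (hα x) (U (τ₀ x))) : ℤ)
      = ∑ x, σ x * ((α x : ℤ) - finrank ℂ (U (τ₀ x))) := by
    refine Finset.sum_congr rfl fun x _ => ?_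
    rw [hrk x]
  have step2 : ∑ x, σ x * ((α x : ℤ) - finrank ℂ (U (τ₀ x)))
      = ∑ x, σ (τ₀ x) * ((α (τ₀ x) : ℤ) - finrank ℂ (U (τ₀ (τ₀ x)))) :=
    (Fintype.sum_equiv (Function.Involutive.toPerm τ₀ hτ₀) _ _ (fun x => rfl)).symm
  have step3 : ∑ x, σ (τ₀ x) * ((α (τ₀ x) : ℤ) - finrank ℂ (U (τ₀ (τ₀ x))))
      = ∑ x, (σ x * (finrank ℂ (U x) : ℤ) - σ x * (α x : ℤ)) := by
    refine Finset.sum_congr rfl fun x _ => ?_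
    have e1 : finrank ℂ (U (τ₀ (τ₀ x))) = finrank ℂ (U x) := by rw [hτ₀ x]
    have e2 : ((α (τ₀ x) : ℤ)) = (α x : ℤ) := by rw [hα x]
    rw [e1, e2, hσ x]; ring
  rw [step1, step2, step3, Finset.sum_sub_distrib, hστ, sub_zero]

lemma fixed_vertex_zero {n m : ℕ} (hα : m = n) (Wx : Submodule ℂ (Fin n → ℂ))
    (Wτ : Submodule ℂ (Fin m → ℂ))
    (hWτ : Wτ = csub hα.symm Wx)
    (hW : Wx ≤ perp hα Wτ) : finrank ℂ Wx = 0 := by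
  suffices h : Wx = ⊥ by rw [h]; exact finrank_bot ℂ _
  rw [Submodule.eq_bot_iff]
  intro v hv
  have hw : (fun k : Fin m => v (Fin.cast hα k)) ∈ Wτ := by
    rw [hWτ]
    exact hv
  have h0 := hW hv _ hw
  have h1 : ∑ i : Fin n, star (v i) * v i = 0 :=
    (Fintype.sum_equiv (finCongr hα) _ _ fun k => rfl).symm.trans h0
  have h2 : ∑ i : Fin n, (Complex.normSq (v i) : ℂ) = 0 := by
    rw [← h1]
    exact Finset.sum_congr rfl fun i _ => by
      rw [Complex.normSq_eq_conj_mul_self]; rfl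
  have h3 : ∑ i : Fin n, Complex.normSq (v i) = 0 :=
    Complex.ofReal_eq_zero.1 (by push_cast; exact h2)
  funext i
  exact Complex.normSq_eq_zero.1
    ((Finset.sum_eq_zero_iff_of_nonneg (fun i _ => Complex.normSq_nonneg _)).1 h3 i
      (Finset.mem_univ i))

/-- For a `τ`-symmetric representation `V` with `α = τ·α` and an
anti-invariant weight `σ = −τ·σ`, if `W` is the minimal witness of `(V,σ)`
then `W^⊥` is the maximal witness; in particular `W` is `τ`-isotropic
(`W ⊆ W^⊥`) and `dim W(x) = 0` at every vertex fixed by `τ`. -/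
theorem minimal_witness_perp {Vt At : Type} [Fintype Vt] [Fintype At]
    (hd tl : At → Vt) (α : Vt → ℕ) (τ₀ : Vt → Vt) (τ₁ : At → At)
    (hτ₀ : ∀ x, τ₀ (τ₀ x) = x) (hτ₁ : ∀ a, τ₁ (τ₁ a) = a)
    (hh : ∀ a, hd (τ₁ a) = τ₀ (tl a)) (ht : ∀ a, tl (τ₁ a) = τ₀ (hd a))
    (hα : ∀ x, α (τ₀ x) = α x)
    (M : ∀ a : At, Matrix (Fin (α (hd a))) (Fin (α (tl a))) ℂ)
    (hsym : TauSymm hd tl α τ₀ τ₁ hh ht hα M)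
    (σ : Vt → ℤ) (hσ : ∀ x, σ (τ₀ x) = -σ x)
    (W : ∀ x : Vt, Submodule ℂ (Fin (α x) → ℂ))
    (hwit : IsWitness hd tl α M σ W)
    (hmin : ∀ W', IsWitness hd tl α M σ W' → ∀ x, W x ≤ W' x) :
    (IsWitness hd tl α M σ (fun x => perp (hα x) (W (τ₀ x))) ∧
      ∀ W', IsWitness hd tl α M σ W' →
        ∀ x, W' x ≤ perp (hα x) (W (τ₀ x))) ∧
    (∀ x, W x ≤ perp (hα x) (W (τ₀ x))) ∧
    (∀ x, τ₀ x = x → Module.finrank ℂ (W x) = 0) := by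
  have hPwit : IsWitness hd tl α M σ (fun x => perp (hα x) (W (τ₀ x))) := by
    refine ⟨perp_subrep hd tl α τ₀ τ₁ hh ht hα M hsym W hwit.1, fun W' hW' => ?_⟩
    have := sval_perp α σ τ₀ hτ₀ hα hσ W
    rw [this]
    exact hwit.2 W' hW'
  have hiso : ∀ x, W x ≤ perp (hα x) (W (τ₀ x)) := hmin _ hPwit
  refine ⟨⟨hPwit, ?_⟩, hiso, ?_⟩
  · intro W' hW' x
    have hP'wit : IsWitness hd tl α M σ (fun y => perp (hα y) (W' (τ₀ y))) := by
      refine ⟨perp_subrep hd tl α τ₀ τ₁ hh ht hα M hsym W' hW'.1, fun W'' hW'' => ?_⟩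
      rw [sval_perp α σ τ₀ hτ₀ hα hσ W']
      exact hW'.2 W'' hW''
    have hm : W (τ₀ x) ≤ perp (hα (τ₀ x)) (W' (τ₀ (τ₀ x))) := hmin _ hP'wit (τ₀ x)
    have h2 := perp_antitone (hα x) hm
    have h3 : W' x = perp (hα x) (perp (hα (τ₀ x)) (W' (τ₀ (τ₀ x)))) := by
      rw [perp_perp (hα (τ₀ x)) (hα x) ((hα (τ₀ x)).trans (hα x))]
      exact vcast α W' (hτ₀ x) ((hα (τ₀ x)).trans (hα x))
    exact h3.trans_le h2
  · intro x hx
    exact fixed_vertex_zero (hα x) (W x) (W (τ₀ x))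
      (vcast α W hx.symm (hα x).symm) (hiso x)
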